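/- Let H, M, J be subgroups of the free group F_k. If H is a free factor of J and H ≤ M ≤ J, then H is a free factor of the intermediate subgroup M. -/

import Mathlib

noncomputable section
open scoped Classical
open CategoryTheory CategoryTheory.ActionCategory CategoryTheory.SingleObj Quiver FreeGroup
  Function IsFreeGroupoid IsFreeGroupoid.SpanningTree

universe u

set_option linter.unusedVariables false in
/-- Analogue of `IsFreeGroupoid.actionGroupoidIsFree`, but for a group equipped with an
explicit free group basis (rather than the one chosen by the `IsFreeGroup` instance). -/
def freeGroupoidOfBasis {G A : Type u} [Group G] {ι : Type u} (b : FreeGroupBasis ι G)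
    [MulAction G A] : IsFreeGroupoid (ActionCategory G A) where
  quiverGenerators :=
    ⟨fun p q => { e : ι // b e • p.back = q.back }⟩
  of := fun (e : { e // _ }) => ⟨b e, e.property⟩
  unique_lift := by
    intro X _ f
    let f' : ι → (A → X) ⋊[mulAutArrow] G := fun e =>
      ⟨fun a => @f ⟨(), _⟩ ⟨(), a⟩ ⟨e, smul_inv_smul _ a⟩, b e⟩
    obtain ⟨F', hF', uF'⟩ : ∃! F' : G →* (A → X) ⋊[mulAutArrow] G, ∀ e, F' (b e) = f' e := by
      refine ⟨b.lift f', fun e => ?_, fun F hF => b.ext_hom _ _ fun i => ?_⟩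
      · simp [FreeGroupBasis.lift]
      · rw [hF]; simp [FreeGroupBasis.lift]
    refine ⟨uncurry F' ?_, ?_, ?_⟩
    · suffices SemidirectProduct.rightHom.comp F' = MonoidHom.id _ by
        exact DFunLike.ext_iff.mp this
      apply b.ext_hom
      intro x
      rw [MonoidHom.comp_apply, hF']
      rfl
    · rintro ⟨⟨⟩, a : A⟩ ⟨⟨⟩, c⟩ ⟨e, h : b e • a = c⟩
      change (F' (b _)).left _ = _
      rw [hF']
      cases inv_smul_eq_iff.mpr h.symm
      rfl
    · intro E hE
      have : curry E = F' := by
        apply uF'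
        intro e
        ext
        · convert! hE _ _ _
          rfl
        · rfl
      apply Functor.hext
      · intro
        apply Unit.ext
      · refine ActionCategory.cases ?_
        intros
        subst this
        rfl


@[simp]
lemma FreeGroupBasis.ofUniqueLift_apply {G : Type u} [Group G] (X : Type u) (of : X → G)
    (h : ∀ {H : Type u} [Group H] (f : X → H), ∃! F : G →* H, ∀ a, F (of a) = f a) (x : X) :
    (FreeGroupBasis.ofUniqueLift X of h) x = of x := by
  change (FreeGroupBasis.ofUniqueLift X of h).repr.symm (FreeGroup.of x) = of x
  simp [FreeGroupBasis.ofUniqueLift, FreeGroupBasis.ofLift]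

variable {G : Type u} [Groupoid.{u} G] [IsFreeGroupoid G]
  (T : WideSubquiver (Symmetrify <| IsFreeGroupoid.Generators G)) [Arborescence T]

/-- The root of the spanning tree, seen in `G` (public replacement for the private
`IsFreeGroupoid.SpanningTree.root'`). -/
def treeRoot : G :=
  show G from Quiver.root (WideSubquiver.toType (Symmetrify (IsFreeGroupoid.Generators G)) T)

lemma treeHom_treeRoot : treeHom T (treeRoot T) = 𝟙 _ :=
  IsFreeGroupoid.SpanningTree.treeHom_root T

lemma endBasisOfTree_aux :
    ∀ {X : Type u} [Group X]
      (f : ((wideSubquiverEquivSetTotal <| wideSubquiverSymmetrify T)ᶜ : Set _) → X),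
      ∃! F : End (treeRoot T) →* X,
        ∀ a, F ((fun e => loopOfHom T (IsFreeGroupoid.of e.val.hom)) a) = f a := by
      intro X _ f
      let f' : Labelling (IsFreeGroupoid.Generators G) X := fun a b e =>
        if h : e ∈ wideSubquiverSymmetrify T a b then 1 else f ⟨⟨a, b, e⟩, h⟩
      rcases IsFreeGroupoid.unique_lift f' with ⟨F', hF', uF'⟩
      refine ⟨F'.mapEnd _, ?_, ?_⟩
      · suffices ∀ {x y} (q : x ⟶ y), F'.map (loopOfHom T q) = (F'.map q : X) by
          rintro ⟨⟨a, b, e⟩, h⟩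
          erw [Functor.mapEnd_apply, this, hF']
          exact dif_neg h
        intros x y q
        suffices ∀ {a} (p : Path (Quiver.root T) a), F'.map (homOfPath T p) = 1 by
          simp only [this, treeHom, comp_as_mul, inv_as_inv, loopOfHom, inv_one, mul_one,
            one_mul, Functor.map_inv, Functor.map_comp]
          rw [this (a := x), this (a := y), inv_one, mul_one, one_mul]
        intro a p
        induction' p with b c p e ih
        · rw [homOfPath]; exact F'.map_id _
        refine (F'.map_comp (homOfPath T p) _).trans ?_
        rw [comp_as_mul, ih]
        refine (mul_one _).trans ?_
        rcases e with ⟨e | e, eT⟩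
        · refine (hF' _ _ e).trans ?_
          exact dif_pos (Or.inl eT)
        · refine (@Functor.map_inv _ _ _ _ F' _ _ (IsFreeGroupoid.of e) (IsIso.of_groupoid _)).trans ?_
          rw [inv_as_inv, inv_eq_one]
          refine (hF' _ _ e).trans ?_
          exact dif_pos (Or.inr eT)
      · intro E hE
        ext x
        have key : (functorOfMonoidHom T E).map x = F'.map x := by
          congr
          apply uF'
          intro a b e
          change E (loopOfHom T _) = dite _ _ _
          split_ifs with h
          · rw [loopOfHom_eq_id T e h]
            have h1 : E (𝟙 (treeRoot T)) = 1 := by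
              rw [← CategoryTheory.End.one_def, E.map_one]
            exact h1
          · exact hE ⟨⟨a, b, e⟩, h⟩
        have h3 : loopOfHom T x = x := by
          simp only [loopOfHom, treeHom_treeRoot, IsIso.inv_id, Category.id_comp,
            Category.comp_id]
          show 𝟙 (treeRoot T) ≫ x ≫ inv (𝟙 (treeRoot T)) = x
          rw [IsIso.inv_id, Category.id_comp, Category.comp_id]
        have key2 : E (loopOfHom T x) = F'.map x := key
        rw [h3] at key2
        exact key2

lemma loopOfHom_treeRoot_end (x : End (treeRoot T)) : loopOfHom T x = x := by
  simp only [loopOfHom, treeHom_treeRoot, IsIso.inv_id, Category.id_comp]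
  show 𝟙 (treeRoot T) ≫ x ≫ inv (𝟙 (treeRoot T)) = x
  rw [IsIso.inv_id, Category.id_comp, Category.comp_id]

/-- Data-valued version of `IsFreeGroupoid.SpanningTree.endIsFree`: the vertex group at the
root is freely based on loops coming from generating arrows in the complement of the tree. -/
def endBasisOfTree :
    FreeGroupBasis ((wideSubquiverEquivSetTotal <| wideSubquiverSymmetrify T)ᶜ : Set _)
      (End (treeRoot T)) :=
  FreeGroupBasis.ofUniqueLift ((wideSubquiverEquivSetTotal <| wideSubquiverSymmetrify T)ᶜ : Set _)
    (fun e => loopOfHom T (IsFreeGroupoid.of e.val.hom)) (endBasisOfTree_aux T)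

lemma endBasisOfTree_apply (e) :
    endBasisOfTree T e = loopOfHom T (IsFreeGroupoid.of e.val.hom) :=
  FreeGroupBasis.ofUniqueLift_apply _ _ (endBasisOfTree_aux T) e

lemma FreeGroupBasis.ne_one {G : Type*} [Group G] {ι : Type*} (b : FreeGroupBasis ι G) (i : ι) :
    b i ≠ 1 := by
  intro h
  have h2 := congrArg b.repr h
  rw [FreeGroupBasis.repr_apply_coe] at h2
  exact FreeGroup.of_ne_one i (h2.trans (_root_.map_one _))

/-- Key lemma: given a free group `Q` with basis `bQ` and a subgroup `M₀`, together with an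
injective family of basis elements `bQ (σ j)` all lying in `M₀`, there is a free group basis
of `M₀` containing all these elements. -/
lemma exists_basis_of_subgroup {Q : Type u} [Group Q] {ι : Type u} (bQ : FreeGroupBasis ι Q)
    (M₀ : Subgroup Q) {κ : Type*} (σ : κ → ι) (hσ : Function.Injective σ)
    (hmem : ∀ j, bQ (σ j) ∈ M₀) :
    ∃ (S : Type u) (c : FreeGroupBasis S ↥M₀) (emb : κ → S), Function.Injective emb ∧
      ∀ j, ((c (emb j) : ↥M₀) : Q) = bQ (σ j) := by
  letI : IsFreeGroupoid (ActionCategory Q (Q ⧸ M₀)) := freeGroupoidOfBasis bQ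
  set G := ActionCategory Q (Q ⧸ M₀) with hG
  let r : G := objEquiv Q (Q ⧸ M₀) ((1 : Q) : Q ⧸ M₀)
  haveI hrc : RootedConnected (show Symmetrify (IsFreeGroupoid.Generators G) from r) :=
    ⟨fun b => IsFreeGroupoid.path_nonempty_of_hom
      (@CategoryTheory.nonempty_hom_of_preconnected_groupoid _ _ (inferInstanceAs (IsPreconnected (ActionCategory Q (Q ⧸ M₀)))) r (show G from b))⟩
  let T : WideSubquiver (Symmetrify (IsFreeGroupoid.Generators G)) :=
    geodesicSubtree (show Symmetrify (IsFreeGroupoid.Generators G) from r)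
  letI : Arborescence (WideSubquiver.toType (Symmetrify (IsFreeGroupoid.Generators G)) T) :=
    geodesicArborescence _
  have hstab : ∀ j, bQ (σ j) • ((1 : Q) : Q ⧸ M₀) = ((1 : Q) : Q ⧸ M₀) := by
    intro j
    have h := hmem j
    rw [← MulAction.stabilizer_quotient M₀] at h
    exact h
  let earr : κ → ((show IsFreeGroupoid.Generators G from r) ⟶
      (show IsFreeGroupoid.Generators G from r)) := fun j =>
    show {e : ι // bQ e • ActionCategory.back (M := Q) r = ActionCategory.back r} from
      ⟨σ j, hstab j⟩
  have hloop : ∀ j, loopOfHom T (IsFreeGroupoid.of (earr j)) = IsFreeGroupoid.of (earr j) :=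
    fun j => loopOfHom_treeRoot_end T (IsFreeGroupoid.of (earr j))
  have hnot : ∀ j, (⟨_, _, earr j⟩ : Total (IsFreeGroupoid.Generators G)) ∈
      ((wideSubquiverEquivSetTotal <| wideSubquiverSymmetrify T)ᶜ : Set _) := by
    intro j
    rw [Set.mem_compl_iff]
    intro hmem'
    have h1 := loopOfHom_eq_id T (earr j) hmem'
    rw [hloop j] at h1
    have h2 : bQ (σ j) = (1 : Q) := congrArg Subtype.val h1
    exact bQ.ne_one (σ j) h2
  refine ⟨_, (endBasisOfTree T).map (endMulEquivSubgroup M₀),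
    fun j => ⟨⟨_, _, earr j⟩, hnot j⟩, ?_, ?_⟩
  · intro j j' h
    apply hσ
    exact congrArg (fun s : ((wideSubquiverEquivSetTotal <|
      wideSubquiverSymmetrify T)ᶜ : Set _) => (s.val.hom.val : ι)) h
  · intro j
    have h3 : (endBasisOfTree T) ⟨⟨_, _, earr j⟩, hnot j⟩ = IsFreeGroupoid.of (earr j) := by
      rw [endBasisOfTree_apply]
      exact hloop j
    change ((endMulEquivSubgroup M₀) ((endBasisOfTree T) ⟨⟨_, _, earr j⟩, hnot j⟩) : Q) = _
    rw [h3]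
    rfl
section PartD
open Monoid

variable {α β : Type*}

/-- From `FreeGroup α ∗ FreeGroup β` to `FreeGroup (α ⊕ β)`. -/
def chiHom : Coprod (FreeGroup α) (FreeGroup β) →* FreeGroup (α ⊕ β) :=
  Coprod.lift (FreeGroup.lift (FreeGroup.of ∘ Sum.inl)) (FreeGroup.lift (FreeGroup.of ∘ Sum.inr))

/-- From `FreeGroup (α ⊕ β)` to `FreeGroup α ∗ FreeGroup β`. -/
def omegaHom : FreeGroup (α ⊕ β) →* Coprod (FreeGroup α) (FreeGroup β) :=
  FreeGroup.lift
    (Sum.elim (fun a => Coprod.inl (FreeGroup.of a)) fun b => Coprod.inr (FreeGroup.of b))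

lemma chiHom_comp_omegaHom :
    (chiHom (α := α) (β := β)).comp omegaHom = MonoidHom.id _ := by
  apply FreeGroup.ext_hom
  rintro (a | b) <;> simp [chiHom, omegaHom]

lemma omegaHom_comp_chiHom :
    (omegaHom (α := α) (β := β)).comp chiHom = MonoidHom.id _ := by
  apply Monoid.Coprod.hom_ext <;>
    · apply FreeGroup.ext_hom
      intro a
      simp [chiHom, omegaHom]

lemma chiHom_injective : Injective (chiHom (α := α) (β := β)) := by
  intro x y h
  have h2 := congrArg omegaHom h
  calc x = omegaHom (chiHom x) := (DFunLike.congr_fun omegaHom_comp_chiHom x).symm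
    _ = omegaHom (chiHom y) := h2
    _ = y := DFunLike.congr_fun omegaHom_comp_chiHom y

lemma chiHom_surjective : Surjective (chiHom (α := α) (β := β)) := fun y =>
  ⟨omegaHom y, DFunLike.congr_fun chiHom_comp_omegaHom y⟩

/-- If a group `G` receives an injective homomorphism from `FreeGroup (α ⊕ β)`, then the
subgroups generated by the images of the two halves of the basis form a free product
decomposition of the image. -/
lemma freeFactor_of_basis_split {G : Type*} [Group G] (φ : FreeGroup (α ⊕ β) →* G)
    (hφ : Injective φ) (A C : Subgroup G)
    (hA : A = Subgroup.closure (Set.range fun a => φ (FreeGroup.of (Sum.inl a))))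
    (hC : C = Subgroup.closure (Set.range fun b => φ (FreeGroup.of (Sum.inr b)))) :
    Injective (Coprod.lift A.subtype C.subtype) ∧
      (Coprod.lift A.subtype C.subtype).range = φ.range := by
  have e1 : φ.comp (FreeGroup.lift (FreeGroup.of ∘ Sum.inl)) =
      FreeGroup.lift fun a => φ (FreeGroup.of (Sum.inl a)) := by
    apply FreeGroup.ext_hom; intro a; simp
  have e2 : φ.comp (FreeGroup.lift (FreeGroup.of ∘ Sum.inr)) =
      FreeGroup.lift fun b => φ (FreeGroup.of (Sum.inr b)) := by
    apply FreeGroup.ext_hom; intro b; simp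
  have hArange : (φ.comp (FreeGroup.lift (FreeGroup.of ∘ Sum.inl))).range = A := by
    rw [e1, FreeGroup.range_lift_eq_closure, hA]
  have hCrange : (φ.comp (FreeGroup.lift (FreeGroup.of ∘ Sum.inr))).range = C := by
    rw [e2, FreeGroup.range_lift_eq_closure, hC]
  let ρA : FreeGroup α →* A :=
    (φ.comp (FreeGroup.lift (FreeGroup.of ∘ Sum.inl))).codRestrict A fun x => by
      rw [← hArange]; exact ⟨x, rfl⟩
  let ρC : FreeGroup β →* C :=
    (φ.comp (FreeGroup.lift (FreeGroup.of ∘ Sum.inr))).codRestrict C fun x => by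
      rw [← hCrange]; exact ⟨x, rfl⟩
  have hρA : Surjective ρA := by
    rintro ⟨y, hy⟩
    rw [← hArange] at hy
    obtain ⟨x, hx⟩ := hy
    exact ⟨x, Subtype.ext hx⟩
  have hρC : Surjective ρC := by
    rintro ⟨y, hy⟩
    rw [← hCrange] at hy
    obtain ⟨x, hx⟩ := hy
    exact ⟨x, Subtype.ext hx⟩
  have key : (Coprod.lift A.subtype C.subtype).comp (Coprod.map ρA ρC) = φ.comp chiHom := by
    apply Coprod.hom_ext
    · rfl
    · rfl
  have hmapsurj : Surjective (Coprod.map ρA ρC) := by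
    intro x
    induction x using Coprod.induction_on with
    | inl m =>
      obtain ⟨a, rfl⟩ := hρA m
      exact ⟨Coprod.inl a, rfl⟩
    | inr m =>
      obtain ⟨a, rfl⟩ := hρC m
      exact ⟨Coprod.inr a, rfl⟩
    | mul x y hx hy =>
      obtain ⟨a, rfl⟩ := hx
      obtain ⟨b, rfl⟩ := hy
      exact ⟨a * b, map_mul _ _ _⟩
  constructor
  · have hinj2 : Injective ((Coprod.lift A.subtype C.subtype).comp (Coprod.map ρA ρC)) := by
      rw [key]
      exact hφ.comp chiHom_injective
    intro x y hxy
    obtain ⟨x', rfl⟩ := hmapsurj x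
    obtain ⟨y', rfl⟩ := hmapsurj y
    exact congrArg _ (hinj2 hxy)
  · apply le_antisymm
    · rintro g ⟨x, rfl⟩
      obtain ⟨x', rfl⟩ := hmapsurj x
      have hx : (Coprod.lift A.subtype C.subtype) (Coprod.map ρA ρC x') = φ (chiHom x') :=
        DFunLike.congr_fun key x'
      rw [hx]
      exact ⟨chiHom x', rfl⟩
    · rintro g ⟨x, rfl⟩
      obtain ⟨y, rfl⟩ := chiHom_surjective x
      have hx : φ (chiHom y) = (Coprod.lift A.subtype C.subtype) (Coprod.map ρA ρC y) :=
        (DFunLike.congr_fun key y).symm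
      rw [hx]
      exact ⟨_, rfl⟩


end PartD

section PartE
open Monoid

lemma FreeGroupBasis.closure_range {ι G : Type*} [Group G] (b : FreeGroupBasis ι G) :
    Subgroup.closure (Set.range ⇑b) = ⊤ := by
  have h : Set.range ⇑b = ⇑b.repr.symm.toMonoidHom '' Set.range (FreeGroup.of (α := ι)) := by
    rw [← Set.range_comp]
    rfl
  rw [h, ← MonoidHom.map_closure, FreeGroup.closure_range_of, ← MonoidHom.range_eq_map]
  exact MonoidHom.range_eq_top_of_surjective _ b.repr.symm.surjective

end PartE

/-- `H` is a free factor of `J`: there is a subgroup `H' ≤ J` such that `J` is the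
internal free product of `H` and `H'`, i.e. the homomorphism from the (external)
free product `H ∗ H'` induced by the inclusions is injective with range `J`. -/
def IsFreeFactor {F : Type*} [Group F] (H J : Subgroup F) : Prop :=
  H ≤ J ∧ ∃ H' : Subgroup F, H' ≤ J ∧
    Function.Injective (Monoid.Coprod.lift H.subtype H'.subtype) ∧
    (Monoid.Coprod.lift H.subtype H'.subtype).range = J

/-- If `H` is a free factor of `J` and `H ≤ M ≤ J`, then `H` is a free factor of the
intermediate subgroup `M`. -/
theorem free_factor_of_intermediate (k : ℕ) (H M J : Subgroup (FreeGroup (Fin k)))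
    (hHJ : IsFreeFactor H J) (hHM : H ≤ M) (hMJ : M ≤ J) :
    IsFreeFactor H M := by
  classical
  obtain ⟨hHJle, H', hH'J, hinj, hrange⟩ := hHJ
  let bH := IsFreeGroup.basis ↥H
  let bB := IsFreeGroup.basis ↥H'
  set X := IsFreeGroup.Generators ↥H with hX
  set Y := IsFreeGroup.Generators ↥H' with hY
  -- the isomorphism `FreeGroup (X ⊕ Y) ≃ H ∗ H'` and the induced map to the ambient group
  let ω₂ : FreeGroup (X ⊕ Y) →* Monoid.Coprod ↥H ↥H' :=
    FreeGroup.lift (Sum.elim (fun x => Monoid.Coprod.inl (bH x)) fun y => Monoid.Coprod.inr (bB y))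
  let ξ : Monoid.Coprod ↥H ↥H' →* FreeGroup (X ⊕ Y) :=
    Monoid.Coprod.lift ((FreeGroup.lift (FreeGroup.of ∘ Sum.inl)).comp bH.repr.toMonoidHom)
      ((FreeGroup.lift (FreeGroup.of ∘ Sum.inr)).comp bB.repr.toMonoidHom)
  have hξω : ξ.comp ω₂ = MonoidHom.id _ := by
    apply FreeGroup.ext_hom
    rintro (x | y) <;>
      simp [ω₂, ξ, FreeGroupBasis.repr_apply_coe]
  have hωξ : ω₂.comp ξ = MonoidHom.id _ := by
    apply Monoid.Coprod.hom_ext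
    · apply bH.ext_hom
      intro i
      simp [ω₂, ξ, FreeGroupBasis.repr_apply_coe]
    · apply bB.ext_hom
      intro i
      simp [ω₂, ξ, FreeGroupBasis.repr_apply_coe]
  have hω₂inj : Function.Injective ω₂ := by
    intro a b h
    have h2 := congrArg ξ h
    calc a = ξ (ω₂ a) := (DFunLike.congr_fun hξω a).symm
      _ = ξ (ω₂ b) := h2
      _ = b := DFunLike.congr_fun hξω b
  have hω₂surj : Function.Surjective ω₂ := fun y => ⟨ξ y, DFunLike.congr_fun hωξ y⟩
  let Θ : FreeGroup (X ⊕ Y) →* FreeGroup (Fin k) :=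
    (Monoid.Coprod.lift H.subtype H'.subtype).comp ω₂
  have hΘinj : Function.Injective Θ := by
    have hco : ⇑Θ = ⇑(Monoid.Coprod.lift H.subtype H'.subtype) ∘ ⇑ω₂ := rfl
    rw [hco]
    exact hinj.comp hω₂inj
  have hΘrange : Θ.range = J := by
    apply le_antisymm
    · rintro g ⟨x, rfl⟩
      rw [← hrange]
      exact ⟨ω₂ x, rfl⟩
    · intro g hg
      rw [← hrange] at hg
      obtain ⟨c, rfl⟩ := hg
      obtain ⟨x, rfl⟩ := hω₂surj c
      exact ⟨x, rfl⟩
  have hval : ∀ x : X, Θ (FreeGroup.of (Sum.inl x)) = (bH x : FreeGroup (Fin k)) := by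
    intro x
    simp [Θ, ω₂]
  -- pull `M` back along `Θ` and find a basis of it containing the basis of `H`
  let M₀ := M.comap Θ
  have hmem : ∀ x : X, (FreeGroupBasis.ofFreeGroup (X ⊕ Y)) (Sum.inl x) ∈ M₀ := by
    intro x
    show Θ (FreeGroup.of (Sum.inl x)) ∈ M
    rw [hval]
    exact hHM (bH x).2
  obtain ⟨S, c, emb, hembinj, hcval⟩ :=
    exists_basis_of_subgroup (FreeGroupBasis.ofFreeGroup (X ⊕ Y)) M₀ Sum.inl
      Sum.inl_injective hmem
  let τ : (X ⊕ {s : S // s ∉ Set.range emb}) ≃ S :=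
    (Equiv.sumCongr (Equiv.ofInjective emb hembinj) (Equiv.refl _)).trans
      (Equiv.sumCompl (· ∈ Set.range emb))
  let c' := c.reindex τ.symm
  let φ : FreeGroup (X ⊕ {s : S // s ∉ Set.range emb}) →* FreeGroup (Fin k) :=
    Θ.comp (M₀.subtype.comp c'.repr.symm.toMonoidHom)
  have hφinj : Function.Injective φ := by
    have hco : ⇑φ = ⇑Θ ∘ (Subtype.val ∘ ⇑c'.repr.symm) := rfl
    rw [hco]
    exact hΘinj.comp ((Subtype.val_injective).comp c'.repr.symm.injective)
  have hφrange : φ.range = M := by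
    apply le_antisymm
    · rintro g ⟨x, rfl⟩
      exact (c'.repr.symm x).2
    · intro g hg
      have hgJ : g ∈ Θ.range := by rw [hΘrange]; exact hMJ hg
      obtain ⟨q, rfl⟩ := hgJ
      have hq : q ∈ M₀ := hg
      refine ⟨c'.repr ⟨q, hq⟩, ?_⟩
      show Θ ((c'.repr.symm (c'.repr ⟨q, hq⟩) : ↥M₀) : FreeGroup (X ⊕ Y)) = Θ q
      rw [MulEquiv.symm_apply_apply]
  have hφinl : ∀ x : X, φ (FreeGroup.of (Sum.inl x)) = (bH x : FreeGroup (Fin k)) := by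
    intro x
    have h1 : c'.repr.symm (FreeGroup.of (Sum.inl x)) = c' (Sum.inl x) := rfl
    have h3 : τ (Sum.inl x) = emb x := by
      simp [τ]
    have h2 : c' (Sum.inl x) = c (emb x) := by
      rw [show c' = c.reindex τ.symm from rfl, FreeGroupBasis.reindex_apply, Equiv.symm_symm, h3]
    show Θ ((c'.repr.symm (FreeGroup.of (Sum.inl x)) : ↥M₀) : FreeGroup (X ⊕ Y)) = _
    rw [h1, h2]
    have h4 := hcval x
    rw [FreeGroupBasis.ofFreeGroup_apply] at h4
    rw [h4, hval]
  have hAid : H = Subgroup.closure (Set.range fun x : X => φ (FreeGroup.of (Sum.inl x))) := by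
    have h5 : (fun x : X => φ (FreeGroup.of (Sum.inl x))) = ⇑H.subtype ∘ ⇑bH := by
      funext x
      exact hφinl x
    rw [h5, Set.range_comp, ← MonoidHom.map_closure, FreeGroupBasis.closure_range,
      ← MonoidHom.range_eq_map, Subgroup.range_subtype]
  obtain ⟨hinj2, hrange2⟩ := freeFactor_of_basis_split φ hφinj H
    (Subgroup.closure (Set.range fun s => φ (FreeGroup.of (Sum.inr s)))) hAid rfl
  refine ⟨hHM, Subgroup.closure (Set.range fun s => φ (FreeGroup.of (Sum.inr s))), ?_,
    hinj2, by rw [hrange2, hφrange]⟩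
  rw [Subgroup.closure_le]
  rintro g ⟨s, rfl⟩
  have : φ (FreeGroup.of (Sum.inr s)) ∈ φ.range := ⟨_, rfl⟩
  rwa [hφrange] at this
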